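/- arXiv:2206.14035 — 5 statements merged into one kernel-verified Lean document; each statement's English description precedes it below -/
import Mathlib

section
/- For every natural number j, W(j) = 2(p^n − 1)·r(j) + 2p^j + 1; equivalently, 2p^j + 1 + 2·r(j)·(p^n − 1) = W(j). (This is the closed formula for the cohomological degree of the generator w_{n+j}, and says the Adams differential d^{r(j)}(y_j) = v^{r(j)} w_{n+j} is degree-consistent.) -/
/-- `q(k) = ∑_{m<k} p^{m(n+1)}`. -/
def qq (p n k : ℕ) : ℕ := ∑ m ∈ Finset.range k, p ^ (m * (n + 1))

/-- `r(j) = p^{i+1}(p^n-1) q(k) + k + p^i` where `j = i + k(n+1)`, `0 ≤ i ≤ n`. -/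
def rr (p n j : ℕ) : ℕ :=
  p ^ (j % (n + 1) + 1) * (p ^ n - 1) * qq p n (j / (n + 1)) + j / (n + 1) + p ^ (j % (n + 1))

/-- `r'(j) = p^{j+1} - r(j)`. -/
def rr' (p n j : ℕ) : ℕ := p ^ (j + 1) - rr p n j

/-- `W(j) = |w_{n+j}|`: `W(j) = 2p^{n+j}+1` for `0 ≤ j ≤ n`, and
`W(j+n+1) = 2p^j(p-1) + W(j) + 2(p^n-1)(p^{n+j+1}+1)`. -/
def WW (p n : ℕ) (j : ℕ) : ℕ :=
  if h : j < n + 1 then 2 * p ^ (n + j) + 1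
  else 2 * p ^ (j - (n + 1)) * (p - 1) + WW p n (j - (n + 1))
       + 2 * (p ^ n - 1) * (p ^ ((j - (n + 1)) + n + 1) + 1)
termination_by j
decreasing_by omega

lemma rr_step (p n j : ℕ) :
    rr p n (j + (n + 1)) = rr p n j + p ^ (j + 1) * (p ^ n - 1) + 1 := by
  have hmod : (j + (n + 1)) % (n + 1) = j % (n + 1) := Nat.add_mod_right _ _
  have hdiv : (j + (n + 1)) / (n + 1) = j / (n + 1) + 1 :=
    Nat.add_div_right _ (by omega)
  have hj : j % (n + 1) + j / (n + 1) * (n + 1) = j := Nat.mod_add_div' j (n + 1)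
  have key : p ^ (j % (n + 1) + 1) * (p ^ (j / (n + 1) * (n + 1))) = p ^ (j + 1) := by
    rw [← pow_add]
    congr 1
    omega
  unfold rr
  rw [hmod, hdiv, qq, Finset.sum_range_succ, ← qq]
  zify at key ⊢
  linear_combination ((p ^ n - 1 : ℕ) : ℤ) * key

/-- Closed formula for the degree of `w_{n+j}`:
`W(j) = 2(p^n-1)*r(j) + 2p^j + 1`, so the Adams differential
`d^{r(j)}(y_j) = v^{r(j)} w_{n+j}` is degree-consistent. -/
theorem W_closed_formula (p n : ℕ) (hp : p.Prime) (hn : 1 ≤ n) (j : ℕ) :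
    WW p n j = 2 * (p ^ n - 1) * rr p n j + 2 * p ^ j + 1 := by
  induction j using Nat.strong_induction_on with
  | _ j IH =>
    have hp2 : 2 ≤ p := hp.two_le
    have hpn : 1 ≤ p ^ n := Nat.one_le_pow _ _ (by omega)
    by_cases hj : j < n + 1
    · rw [WW, dif_pos hj]
      have h1 : j % (n + 1) = j := Nat.mod_eq_of_lt hj
      have h2 : j / (n + 1) = 0 := Nat.div_eq_of_lt hj
      unfold rr
      rw [h1, h2]
      simp only [qq, Finset.range_zero, Finset.sum_empty, Nat.mul_zero, Nat.zero_add]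
      rw [pow_add]
      zify [hpn]
      ring
    · rw [WW, dif_neg hj]
      set j' := j - (n + 1) with hj'
      have hjj : j = j' + (n + 1) := by omega
      have hlt : j' < j := by omega
      rw [IH j' hlt, hjj, rr_step]
      have e1 : p ^ (j' + n + 1) = p ^ j' * p ^ n * p := by ring
      have e2 : p ^ (j' + (n + 1)) = p ^ j' * p ^ n * p := by ring
      have e3 : p ^ (j' + 1) = p ^ j' * p := by ring
      rw [e1, e2, e3]
      have hp1 : 1 ≤ p := by omega
      zify [hpn, hp1]
      ring
end

section
/- If p is an odd prime, then for every natural number j one has the strict inequalities r(j) < r'(j) and r'(j) < r(j+1). -/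
lemma qq_succ (p n k : ℕ) : qq p n (k + 1) = qq p n k + (p ^ (n + 1)) ^ k := by
  simp [qq, Finset.sum_range_succ, pow_mul, pow_right_comm]

lemma qq_geom (p n : ℕ) (hp : 1 ≤ p) (k : ℕ) :
    (p ^ (n + 1) - 1) * qq p n k + 1 = (p ^ (n + 1)) ^ k := by
  induction k with
  | zero => simp [qq]
  | succ k ih =>
    have hP : 1 ≤ p ^ (n + 1) := Nat.one_le_pow _ _ (by omega)
    have hs : p ^ (n + 1) - 1 + 1 = p ^ (n + 1) := Nat.sub_add_cancel hP
    rw [qq_succ, pow_succ]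
    calc (p ^ (n+1) - 1) * (qq p n k + (p ^ (n+1)) ^ k) + 1
        = ((p ^ (n+1) - 1) * qq p n k + 1) + (p ^ (n+1) - 1) * (p ^ (n+1)) ^ k := by ring
      _ = (p ^ (n+1)) ^ k + (p ^ (n+1) - 1) * (p ^ (n+1)) ^ k := by rw [ih]
      _ = (1 + (p ^ (n+1) - 1)) * (p ^ (n+1)) ^ k := by ring
      _ = (p ^ (n+1)) ^ k * p ^ (n+1) := by rw [add_comm, hs]; ring

lemma qq_ge (p n : ℕ) (hp : 1 ≤ p) (k : ℕ) : k ≤ qq p n k := by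
  calc k = ∑ _m ∈ Finset.range k, 1 := by simp
    _ ≤ qq p n k := Finset.sum_le_sum fun m _ => Nat.one_le_pow _ _ (by omega)


set_option maxHeartbeats 1600000 in
/-- For odd primes `p`: `r(j) < r'(j) < r(j+1)` for all `j`. -/
theorem r_lt_r'_lt_r_succ_odd (p n : ℕ) (hp : p.Prime) (hodd : Odd p) (hn : 1 ≤ n) (j : ℕ) :
    rr p n j < rr' p n j ∧ rr' p n j < rr p n (j + 1) := by
  have hp3 : 3 ≤ p := by
    rcases hodd with ⟨t, ht⟩
    have h2 := hp.two_le
    omega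
  have hp1 : 0 < p := by omega
  obtain ⟨i, k, hin, hj⟩ : ∃ i k, i ≤ n ∧ j = (n + 1) * k + i := by
    refine ⟨j % (n + 1), j / (n + 1), ?_, (Nat.div_add_mod j (n + 1)).symm⟩
    have := Nat.mod_lt j (show 0 < n + 1 by omega)
    omega
  have hmod : j % (n + 1) = i := by
    rw [hj, Nat.mul_add_mod, Nat.mod_eq_of_lt (by omega)]
  have hdiv : j / (n + 1) = k := by
    rw [hj, Nat.mul_add_div (by omega), Nat.div_eq_of_lt (by omega)]
    omega
  have hB1 : 1 ≤ p ^ n := Nat.one_le_pow _ _ hp1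
  have hB : p ^ n - 1 + 1 = p ^ n := Nat.sub_add_cancel hB1
  set B := p ^ n - 1 with hBdef
  set q := qq p n k with hqdef
  have hq : k ≤ q := qq_ge p n (by omega) k
  set P1 := p ^ (n + 1) - 1 with hP1def
  have hQ : P1 * q + 1 = (p ^ (n + 1)) ^ k := qq_geom p n (by omega) k
  have hP1 : P1 + 1 = (B + 1) * p := by
    rw [hP1def, Nat.sub_add_cancel (Nat.one_le_pow _ _ hp1), hB, pow_succ]
  set a := p ^ i with hadef
  have ha : 1 ≤ a := Nat.one_le_pow _ _ hp1
  clear_value B q P1 a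
  have hpB : p ≤ B + 1 := by
    rw [hB]
    calc p = p ^ 1 := (pow_one p).symm
      _ ≤ p ^ n := Nat.pow_le_pow_right hp1 hn
  have hpow : p ^ (j + 1) = a * p * (P1 * q + 1) := by
    rw [hQ, hadef, hj, show (n + 1) * k + i + 1 = (i + 1) + (n + 1) * k from by ring,
      pow_add, pow_mul, pow_succ]
  have key1 : 2 * rr p n j < p ^ (j + 1) := by
    rw [rr, hmod, hdiv, hpow, ← hqdef, ← hBdef, pow_succ p i, ← hadef]
    have hP1ge : B * p + 2 ≤ P1 := by linarith [hP1, hp3]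
    have h2 : (a * p * q) * (B * p + 2) ≤ (a * p * q) * P1 :=
      Nat.mul_le_mul le_rfl hP1ge
    have h3 : 3 * (a * B * p * q) ≤ p * (a * B * p * q) :=
      Nat.mul_le_mul hp3 le_rfl
    have h4 : k ≤ a * p * q := by
      calc k ≤ q := hq
        _ ≤ a * p * q := Nat.le_mul_of_pos_left _ (by positivity)
    have h5 : 2 * a + 1 ≤ a * p := by
      have := Nat.mul_le_mul (le_refl a) hp3
      omega
    nlinarith [h2, h3, h4, h5]
  have key2 : p ^ (j + 1) < rr p n j + rr p n (j + 1) := by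
    have hP1le : P1 ≤ B * p + B := by linarith [hP1, hpB]
    rcases Nat.lt_or_ge i n with hcase | hcase
    · -- i < n : (j+1) % (n+1) = i+1, (j+1)/(n+1) = k
      have hmod' : (j + 1) % (n + 1) = i + 1 := by
        rw [hj, show (n + 1) * k + i + 1 = (n + 1) * k + (i + 1) from rfl,
          Nat.mul_add_mod, Nat.mod_eq_of_lt (by omega)]
      have hdiv' : (j + 1) / (n + 1) = k := by
        rw [hj, show (n + 1) * k + i + 1 = (n + 1) * k + (i + 1) from rfl,
          Nat.mul_add_div (by omega), Nat.div_eq_of_lt (by omega)]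
        omega
      rw [rr, rr, hmod, hdiv, hmod', hdiv', hpow, ← hqdef, ← hBdef,
        pow_succ p (i + 1), pow_succ p i, ← hadef]
      have h6 : (a * p * q) * P1 ≤ (a * p * q) * (B * p + B) :=
        Nat.mul_le_mul le_rfl hP1le
      nlinarith [h6, ha]
    · -- i = n : j+1 = (n+1)(k+1)
      have hieq : i = n := le_antisymm hin hcase
      have hj' : j + 1 = (n + 1) * (k + 1) := by rw [hj, hieq]; ring
      have hmod' : (j + 1) % (n + 1) = 0 := by rw [hj', Nat.mul_mod_right]
      have hdiv' : (j + 1) / (n + 1) = k + 1 := by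
        rw [hj', Nat.mul_div_cancel_left _ (show 0 < n + 1 by omega)]
      have haB : a = B + 1 := by rw [hadef, hieq, hB]
      rw [rr, rr, hmod, hdiv, hmod', hdiv', hpow, qq_succ, ← hQ, ← hqdef, ← hBdef,
        pow_succ p i, ← hadef, haB]
      simp only [zero_add, pow_zero, pow_one]
      have h7 : (p * q) * P1 ≤ (p * q) * (B * p + B) :=
        Nat.mul_le_mul le_rfl hP1le
      have h8 : p * (p * B * q) ≤ (B + 1) * (p * B * q) :=
        Nat.mul_le_mul hpB le_rfl
      nlinarith [h7, h8, hpB, hq]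
  refine ⟨?_, ?_⟩ <;> (rw [rr']; omega)
end

section
/- For every natural number j one has r(j) ≤ p^j, and for every j ≥ 1 one has p^{j−1} < r(j). -/
/-- `r(j) <= p^j` for all `j`, and `p^{j-1} < r(j)` for `j >= 1`. -/
theorem r_bounds (p n : ℕ) (hp : p.Prime) (hn : 1 ≤ n) :
    (∀ j, rr p n j ≤ p ^ j) ∧ (∀ j, 1 ≤ j → p ^ (j - 1) < rr p n j) := by
  have hp2 : 2 ≤ p := hp.two_le
  have key : ∀ i k, p ^ (i+1) * (p ^ n - 1) * qq p n k + k + p ^ i ≤ p ^ (i + k * (n+1)) := by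
    intro i k
    induction k with
    | zero => simp [qq]
    | succ k ih =>
      have hqq : qq p n (k+1) = qq p n k + p ^ (k * (n+1)) := by
        simp [qq, Finset.sum_range_succ]
      have hexp : i + (k+1) * (n+1) = (i + k * (n+1)) + n + 1 := by ring
      have hT : p ^ (i+1) * (p ^ n - 1) * p ^ (k * (n+1))
          = p ^ ((i + k * (n+1)) + n + 1) - p ^ ((i + k * (n+1)) + 1) := by
        have h1 : p ^ (i+1) * (p ^ n - 1) * p ^ (k * (n+1))
            = (p ^ n - 1) * p ^ ((i + k * (n+1)) + 1) := by
          rw [show (i + k * (n+1)) + 1 = (i+1) + k * (n+1) from by ring, pow_add]; ring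
        rw [h1, tsub_mul, one_mul, ← pow_add]
        ring_nf
      set A := i + k * (n + 1) with hA
      have h2 : p ^ (A + 1) ≤ p ^ (A + n + 1) := Nat.pow_le_pow_right (by omega) (by omega)
      have h3 : p ^ A + 1 ≤ p ^ (A + 1) := by
        have : p ^ (A + 1) = p * p ^ A := by ring
        have hpos : 1 ≤ p ^ A := Nat.one_le_pow _ _ (by omega)
        nlinarith
      rw [hqq, hexp]
      have expand : p ^ (i+1) * (p ^ n - 1) * (qq p n k + p ^ (k * (n+1)))
          = p ^ (i+1) * (p ^ n - 1) * qq p n k + (p ^ (A + n + 1) - p ^ (A + 1)) := by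
        rw [Nat.mul_add, hT]
      rw [expand]
      omega
  constructor
  · intro j
    have := key (j % (n+1)) (j / (n+1))
    have hj : j % (n+1) + j / (n+1) * (n+1) = j := Nat.mod_add_div' j (n+1)
    rw [hj] at this
    exact this
  · intro j hj
    set i := j % (n+1) with hi
    set k := j / (n+1) with hk
    have hjeq : i + k * (n+1) = j := Nat.mod_add_div' j (n+1)
    rcases Nat.eq_zero_or_pos k with hk0 | hk1
    · have hij : i = j := by rw [hk0] at hjeq; simpa using hjeq
      have : rr p n j = p ^ j := by
        simp [rr, qq, ← hi, ← hk, hk0, hij]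
      rw [this]
      exact Nat.pow_lt_pow_right (by omega) (by omega)
    · -- k ≥ 1
      have hqge : p ^ ((k-1) * (n+1)) ≤ qq p n k := by
        have hmem : k - 1 ∈ Finset.range k := Finset.mem_range.mpr (by omega)
        exact Finset.single_le_sum (f := fun m => p ^ (m * (n+1))) (fun _ _ => Nat.zero_le _) hmem
      set B := i + 1 + (k-1) * (n+1) with hB
      have hBn : B + n = j := by
        have : k = (k-1) + 1 := by omega
        rw [hB]
        nlinarith [hjeq, this]
      have hT : p ^ (i+1) * (p ^ n - 1) * p ^ ((k-1) * (n+1)) = p ^ (B + n) - p ^ B := by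
        have h1 : p ^ (i+1) * (p ^ n - 1) * p ^ ((k-1) * (n+1)) = (p ^ n - 1) * p ^ B := by
          rw [hB, show i + 1 + (k-1) * (n+1) = (i+1) + (k-1) * (n+1) from by ring, pow_add]; ring
        rw [h1, tsub_mul, one_mul, ← pow_add]
        ring_nf
      have hlow : p ^ (B + n) - p ^ B + p ^ i ≤ rr p n j := by
        have : p ^ (i+1) * (p ^ n - 1) * p ^ ((k-1) * (n+1)) ≤ p ^ (i+1) * (p ^ n - 1) * qq p n k :=
          Nat.mul_le_mul_left _ hqge
        rw [hT] at this
        simp only [rr, ← hi, ← hk]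
        omega
      have hj1 : j - 1 = B + (n - 1) := by omega
      have h4 : p ^ B ≤ p ^ (B + (n-1)) := Nat.pow_le_pow_right (by omega) (by omega)
      have h5 : 2 * p ^ (B + (n-1)) ≤ p ^ (B + n) := by
        have : p ^ (B + n) = p * p ^ (B + (n-1)) := by
          rw [← pow_succ']
          congr 1; omega
        nlinarith [Nat.one_le_pow (B + (n-1)) p (by omega : 0 < p)]
      have h6 : 1 ≤ p ^ i := Nat.one_le_pow _ _ (by omega)
      rw [hj1]
      omega
end

section
/- For every natural number j one has r'(j) ≥ p^{j+1} − p^j, and for every j ≥ 1 one has r'(j) < p^{j+1} − p^{j−1}. -/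
lemma rr_key (p n : ℕ) (hp : 2 ≤ p) (hn : 1 ≤ n) (k i : ℕ) :
    p ^ (i + 1) * (p ^ n - 1) * qq p n k + k + p ^ i ≤ p ^ (i + k * (n + 1)) ∧
    p ^ (i + k * (n + 1)) < p * (p ^ (i + 1) * (p ^ n - 1) * qq p n k + k + p ^ i) := by
  induction k with
  | zero =>
    simp [qq]
    have h1 : 0 < p ^ i := Nat.one_le_pow _ _ (by omega)
    nlinarith
  | succ k ih =>
    obtain ⟨ih1, ih2⟩ := ih
    have hqq : qq p n (k + 1) = qq p n k + p ^ (k * (n + 1)) := by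
      simp [qq, Finset.sum_range_succ]
    set j := i + k * (n + 1) with hj
    have hj' : i + (k + 1) * (n + 1) = j + (n + 1) := by ring
    have hc : 1 ≤ p ^ n - 1 := by
      have : p ≤ p ^ n := Nat.le_self_pow (by omega) p
      omega
    have hA : p ^ (i + 1) * (p ^ n - 1) * p ^ (k * (n + 1))
        = p ^ (j + 1) * (p ^ n - 1) := by
      rw [mul_right_comm]
      congr 1
      rw [← pow_add]
      congr 1
      omega
    have hpn : p ^ n = (p ^ n - 1) + 1 := by
      have : 1 ≤ p ^ n := Nat.one_le_pow _ _ (by omega)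
      omega
    have hsplit : p ^ (j + (n + 1)) = p ^ (j + 1) * (p ^ n - 1) + p ^ (j + 1) := by
      have : p ^ (j + (n + 1)) = p ^ (j + 1) * p ^ n := by
        rw [← pow_add]; congr 1; omega
      have h2 : p ^ (j + 1) * (p ^ n - 1) = p ^ (j + 1) * p ^ n - p ^ (j + 1) :=
        by rw [Nat.mul_sub, mul_one]
      have h3 : p ^ (j + 1) ≤ p ^ (j + 1) * p ^ n :=
        Nat.le_mul_of_pos_right _ (Nat.one_le_pow _ _ (by omega))
      omega
    have hR' : p ^ (i + 1) * (p ^ n - 1) * qq p n (k + 1) + (k + 1) + p ^ i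
        = (p ^ (i + 1) * (p ^ n - 1) * qq p n k + k + p ^ i)
          + p ^ (j + 1) * (p ^ n - 1) + 1 := by
      rw [hqq, Nat.mul_add, hA]; ring
    rw [hj', hR', hsplit]
    constructor
    · -- upper bound
      have h1 : p ^ j + 1 ≤ p ^ (j + 1) := by
        have : 2 * p ^ j ≤ p * p ^ j := Nat.mul_le_mul_right _ hp
        have hpos : 1 ≤ p ^ j := Nat.one_le_pow _ _ (by omega)
        rw [pow_succ, mul_comm]
        omega
      omega
    · -- lower bound
      have hAge : p ^ (j + 1) ≤ p ^ (j + 1) * (p ^ n - 1) := Nat.le_mul_of_pos_right _ hc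
      have h2 : p * (p ^ (j + 1) * (p ^ n - 1)) ≥ 2 * (p ^ (j + 1) * (p ^ n - 1)) :=
        Nat.mul_le_mul_right _ hp
      have hRpos : 1 ≤ p ^ (i + 1) * (p ^ n - 1) * qq p n k + k + p ^ i := by
        have : 1 ≤ p ^ i := Nat.one_le_pow _ _ (by omega)
        omega
      have hp1 : 1 ≤ p := by omega
      nlinarith [Nat.one_le_pow i p (show 0 < p by omega)]

/-- `p^{j+1} - p^j <= r'(j)` for all `j`, and `r'(j) < p^{j+1} - p^{j-1}` for `j >= 1`. -/
theorem r'_bounds (p n : ℕ) (hp : p.Prime) (hn : 1 ≤ n) :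
    (∀ j, p ^ (j + 1) - p ^ j ≤ rr' p n j) ∧
    (∀ j, 1 ≤ j → rr' p n j < p ^ (j + 1) - p ^ (j - 1)) := by
  have hp2 : 2 ≤ p := hp.two_le
  have key : ∀ j, rr p n j ≤ p ^ j ∧ p ^ j < p * rr p n j := by
    intro j
    have h := rr_key p n hp2 hn (j / (n + 1)) (j % (n + 1))
    have hj : j % (n + 1) + j / (n + 1) * (n + 1) = j := Nat.mod_add_div' j (n + 1)
    rw [hj] at h
    exact h
  constructor
  · intro j
    exact Nat.sub_le_sub_left (key j).1 _
  · intro j hj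
    have hlow : p ^ (j - 1) < rr p n j := by
      have h := (key j).2
      have : p ^ j = p * p ^ (j - 1) := by
        rw [← pow_succ']
        congr 1
        omega
      rw [this] at h
      exact Nat.lt_of_mul_lt_mul_left h
    have h1 : p ^ (j - 1) < p ^ (j + 1) :=
      Nat.pow_lt_pow_right (by omega) (by omega)
    exact Nat.sub_lt_sub_left h1 hlow
end

section
/- Let p be an odd prime and n ≥ 1. For all natural numbers j, i, k with 0 ≤ k ≤ i < n, one has the strict inequality (r'(j) + r(j+i+1))·(p^n − 1) < p^{n+j+i+2} + p^k − p^{j+i+1} − 1. (This inequality shows that a hypothetical Adams differential from the degree of w_{n+j+i+1} hitting v^r times the class in the degree of z_{n+j+i−k+2}^{p^k} would have length r > r'(j), so it cannot occur.) -/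
lemma qq_cast (p n k : ℕ) :
    ((p:ℤ)^(n+1) - 1) * (qq p n k : ℤ) = (p:ℤ)^(k*(n+1)) - 1 := by
  have h : (qq p n k : ℤ) = ∑ m ∈ Finset.range k, ((p:ℤ)^(n+1))^m := by
    push_cast [qq, ← pow_mul]
    exact Finset.sum_congr rfl fun m _ => by ring_nf
  rw [h, mul_comm, geom_sum_mul, ← pow_mul, mul_comm (n+1) k]

lemma rr_le (p n m : ℕ) (hp : 2 ≤ p) : (rr p n m : ℤ) ≤ (p:ℤ)^m + m := by
  set i := m % (n+1) with hi
  set k := m / (n+1) with hk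
  have him : i + (n+1) * k = m := Nat.mod_add_div m (n+1)
  have hq0 : 0 ≤ (qq p n k : ℤ) := by positivity
  have hp1 : (1:ℤ) ≤ (p:ℤ) := by exact_mod_cast Nat.one_le_of_lt hp
  have hpn : (1:ℕ) ≤ p ^ n := Nat.one_le_pow _ _ (by omega)
  have hcast : (rr p n m : ℤ)
      = (p:ℤ)^(i+1) * ((p:ℤ)^n - 1) * (qq p n k : ℤ) + k + (p:ℤ)^i := by
    have hrr : rr p n m = p^(i+1) * (p^n - 1) * qq p n k + k + p^i := by
      rw [rr, ← hi, ← hk]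
    rw [hrr]
    push_cast [Nat.cast_sub hpn]
    ring
  have hgeom := qq_cast p n k
  have hkey : (p:ℤ)^(i+1) * ((p:ℤ)^n - 1) * (qq p n k : ℤ)
      ≤ (p:ℤ)^i * ((p:ℤ)^(k*(n+1)) - 1) := by
    have h1 : (p:ℤ) * ((p:ℤ)^n - 1) ≤ (p:ℤ)^(n+1) - 1 := by
      have : (p:ℤ)^(n+1) = (p:ℤ) * (p:ℤ)^n := by ring
      nlinarith
    calc (p:ℤ)^(i+1) * ((p:ℤ)^n - 1) * (qq p n k : ℤ)
        = (p:ℤ)^i * ((p:ℤ) * ((p:ℤ)^n - 1) * (qq p n k : ℤ)) := by ring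
      _ ≤ (p:ℤ)^i * (((p:ℤ)^(n+1) - 1) * (qq p n k : ℤ)) := by
          apply mul_le_mul_of_nonneg_left _ (by positivity)
          exact mul_le_mul_of_nonneg_right h1 hq0
      _ = (p:ℤ)^i * ((p:ℤ)^(k*(n+1)) - 1) := by rw [hgeom]
  have hpm : (p:ℤ)^i * (p:ℤ)^(k*(n+1)) = (p:ℤ)^m := by
    rw [← pow_add]
    congr 1
    rw [← him]
    ring
  have hkm : (k:ℤ) ≤ (m:ℤ) := by exact_mod_cast Nat.div_le_self m (n+1)
  rw [hcast]
  nlinarith [pow_nonneg (le_trans zero_le_one hp1) i]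

/-- For an odd prime `p`, `n >= 1`, and `0 <= k <= i < n`:
`(r'(j) + r(j+i+1))(p^n - 1) < p^{n+j+i+2} + p^k - p^{j+i+1} - 1`. -/
theorem too_long (p n : ℕ) (hp : p.Prime) (hodd : Odd p) (hn : 1 ≤ n)
    (j i k : ℕ) (hki : k ≤ i) (hin : i < n) :
    ((rr' p n j : ℤ) + (rr p n (j + i + 1) : ℤ)) * ((p : ℤ) ^ n - 1)
      < (p : ℤ) ^ (n + j + i + 2) + (p : ℤ) ^ k - (p : ℤ) ^ (j + i + 1) - 1 := by
  have hp3 : 3 ≤ p := by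
    rcases hp.eq_two_or_odd with h | h
    · exfalso; rw [h] at hodd; exact (Nat.not_odd_iff_even.mpr (by decide)) hodd
    · have := hp.two_le; omega
  have hp3' : (3:ℤ) ≤ (p:ℤ) := by exact_mod_cast hp3
  have h1 : (rr' p n j : ℤ) ≤ (p:ℤ)^(j+1) := by
    have : rr' p n j ≤ p^(j+1) := Nat.sub_le _ _
    exact_mod_cast this
  have h2 : (rr p n (j+i+1) : ℤ) ≤ (p:ℤ)^(j+i+1) + (j+i+1 : ℕ) := rr_le p n _ (by omega)
  set A := (p:ℤ)^n with hA
  set B := (p:ℤ)^(j+i+1) with hB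
  have hA3 : 3 ≤ A := by
    calc (3:ℤ) ≤ (p:ℤ)^1 := by simpa using hp3'
    _ ≤ A := pow_le_pow_right₀ (by linarith) hn
  have hB3 : 3 ≤ B := by
    calc (3:ℤ) ≤ (p:ℤ)^1 := by simpa using hp3'
    _ ≤ B := pow_le_pow_right₀ (by linarith) (by omega)
  have hMB : ((j+i+1 : ℕ) : ℤ) < B := by
    have : (j+i+1) < p^(j+i+1) := Nat.lt_pow_self (by omega)
    rw [hB]; exact_mod_cast this
  have hpj1 : (p:ℤ)^(j+1) ≤ B := pow_le_pow_right₀ (by linarith) (by omega)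
  have hexp : (p:ℤ)^(n+j+i+2) = (p:ℤ) * A * B := by
    rw [hA, hB, ← pow_succ', ← pow_add]
    congr 1
    omega
  have hk1 : (1:ℤ) ≤ (p:ℤ)^k := by exact_mod_cast Nat.one_le_pow k p (by omega)
  rw [hexp]
  nlinarith [mul_le_mul_of_nonneg_right (add_le_add (h1.trans hpj1) h2)
      (by linarith : (0:ℤ) ≤ A - 1),
    mul_lt_mul_of_pos_right hMB (by linarith : (0:ℤ) < A),
    mul_le_mul_of_nonneg_right (mul_le_mul_of_nonneg_right hp3' (by linarith : (0:ℤ) ≤ A))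
      (by linarith : (0:ℤ) ≤ B)]
end
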